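/- Let K,J ≥ 1, and for reals g_1,…,g_K, g_{⊥,1},…,g_{⊥,J} define the pointwise softmax L2D risk C(g) = Σ_{y=1}^K η_y · (−log softmax_y(g)) + Σ_{j=1}^J p_j · (−log softmax_{⊥,j}(g)), where softmax is over all K+J coordinates, η is a probability vector with all η_y > 0, and p_j ∈ (0,1]. Then any critical point g* of C satisfies softmax_y(g*) = η_y / (1 + Σ_j p_j) for all y and softmax_{⊥,j}(g*) = p_j / (1 + Σ_j p_j) for all j. -/

import Mathlib

open Finset Real

noncomputable def softmaxL2D {K J : ℕ} (g : Fin K ⊕ Fin J → ℝ) (i : Fin K ⊕ Fin J) : ℝ :=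
  Real.exp (g i) / ∑ i', Real.exp (g i')

noncomputable def softmaxRisk {K J : ℕ} (η : Fin K → ℝ) (p : Fin J → ℝ)
    (g : Fin K ⊕ Fin J → ℝ) : ℝ :=
  (∑ y, η y * (-Real.log (softmaxL2D g (Sum.inl y)))) +
  (∑ j, p j * (-Real.log (softmaxL2D g (Sum.inr j))))

theorem softmax_risk_critical_point (K J : ℕ) (hK : 1 ≤ K) (hJ : 1 ≤ J)
    (η : Fin K → ℝ) (hη0 : ∀ y, 0 < η y) (hηsum : ∑ y, η y = 1)
    (p : Fin J → ℝ) (hp : ∀ j, 0 < p j ∧ p j ≤ 1)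
    (g : Fin K ⊕ Fin J → ℝ)
    (hcrit : ∀ i, deriv (fun s => softmaxRisk η p (Function.update g i s)) (g i) = 0) :
    (∀ y, softmaxL2D g (Sum.inl y) = η y / (1 + ∑ j, p j)) ∧
    (∀ j, softmaxL2D g (Sum.inr j) = p j / (1 + ∑ j', p j')) := by
  haveI : Nonempty (Fin K) := ⟨⟨0, hK⟩⟩
  haveI : Nonempty (Fin K ⊕ Fin J) := ⟨Sum.inl ⟨0, hK⟩⟩
  set P := ∑ j, p j with hP
  have hPnn : 0 ≤ P := Finset.sum_nonneg fun j _ => (hp j).1.le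
  have hPpos : 0 < 1 + P := by linarith
  set w : Fin K ⊕ Fin J → ℝ := Sum.elim η p with hw
  have hSpos : ∀ g' : Fin K ⊕ Fin J → ℝ, 0 < ∑ i', Real.exp (g' i') :=
    fun g' => Finset.sum_pos (fun i _ => Real.exp_pos _) Finset.univ_nonempty
  have risk_eq : ∀ g' : Fin K ⊕ Fin J → ℝ,
      softmaxRisk η p g' = (1 + P) * Real.log (∑ i', Real.exp (g' i')) - ∑ k, w k * g' k := by
    intro g'
    have hS := hSpos g'
    have hlog : ∀ i, -Real.log (softmaxL2D g' i) = Real.log (∑ i', Real.exp (g' i')) - g' i := by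
      intro i
      unfold softmaxL2D
      rw [Real.log_div (Real.exp_ne_zero _) (ne_of_gt hS), Real.log_exp]
      ring
    unfold softmaxRisk
    simp only [hlog]
    simp only [Fintype.sum_sum_type, hw, Sum.elim_inl, Sum.elim_inr, mul_sub]
    rw [Finset.sum_sub_distrib, Finset.sum_sub_distrib, ← Finset.sum_mul, ← Finset.sum_mul,
      hηsum, ← hP]
    ring
  have key : ∀ i, (1 + P) * (Real.exp (g i) / ∑ i', Real.exp (g i')) = w i := by
    intro i
    set C := ∑ k ∈ (Finset.univ \ {i} : Finset (Fin K ⊕ Fin J)), Real.exp (g k) with hCdef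
    set D := ∑ k ∈ (Finset.univ \ {i} : Finset (Fin K ⊕ Fin J)), w k * g k with hDdef
    have hC : ∀ s : ℝ, (∑ i', Real.exp (Function.update g i s i')) = Real.exp s + C := by
      intro s
      rw [show (∑ i', Real.exp (Function.update g i s i'))
          = ∑ i', Function.update (fun k => Real.exp (g k)) i (Real.exp s) i' from
        Finset.sum_congr rfl fun k _ => by
          rcases eq_or_ne k i with hk | hk
          · subst hk; simp
          · simp [Function.update_of_ne hk]]
      exact Finset.sum_update_of_mem (Finset.mem_univ i) _ _
    have hL : ∀ s : ℝ, (∑ k, w k * Function.update g i s k) = w i * s + D := by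
      intro s
      rw [show (∑ k, w k * Function.update g i s k)
          = ∑ k, Function.update (fun k => w k * g k) i (w i * s) k from
        Finset.sum_congr rfl fun k _ => by
          rcases eq_or_ne k i with hk | hk
          · subst hk; simp
          · simp [Function.update_of_ne hk]]
      exact Finset.sum_update_of_mem (Finset.mem_univ i) _ _
    have hCnn : 0 ≤ C := Finset.sum_nonneg fun k _ => (Real.exp_pos _).le
    have hFeq : (fun s => softmaxRisk η p (Function.update g i s))
        = fun s => (1 + P) * Real.log (Real.exp s + C) - (w i * s + D) := by
      funext s; rw [risk_eq, hC, hL]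
    have hder : HasDerivAt (fun s => (1 + P) * Real.log (Real.exp s + C) - (w i * s + D))
        ((1 + P) * (Real.exp (g i) / (Real.exp (g i) + C)) - w i) (g i) := by
      have h1 : HasDerivAt (fun s : ℝ => Real.exp s + C) (Real.exp (g i)) (g i) :=
        (Real.hasDerivAt_exp (g i)).add_const C
      have hpos : Real.exp (g i) + C ≠ 0 := by positivity
      have h2 := (h1.log hpos).const_mul (1 + P)
      have h3 : HasDerivAt (fun s : ℝ => w i * s + D) (w i) (g i) := by
        simpa using ((hasDerivAt_id (g i)).const_mul (w i)).add_const D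
      simpa [div_eq_mul_inv, mul_comm, mul_assoc, mul_left_comm] using (show HasDerivAt (fun s => (1 + P) * Real.log (Real.exp s + C) - (w i * s + D)) _ (g i) from h2.sub h3)
    have hS' : (∑ i', Real.exp (g i')) = Real.exp (g i) + C := by
      have := hC (g i)
      rwa [Function.update_eq_self] at this
    have := hcrit i
    rw [hFeq, hder.deriv] at this
    rw [hS']
    linarith
  have hfinal : ∀ i, softmaxL2D g i = w i / (1 + P) := by
    intro i
    have := key i
    unfold softmaxL2D
    field_simp at this ⊢
    linarith
  exact ⟨fun y => hfinal (Sum.inl y), fun j => hfinal (Sum.inr j)⟩
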